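/- arXiv:0902.2296 — 2 statements merged into one kernel-verified Lean document; each statement's English description precedes it below -/
import Mathlib

section
/- Let (Ω, 𝒜, P) be a probability space, T a finite rooted tree with root v0 and levels α satisfying the local Bonferroni condition, t : V → {0,1} a labeling with first-true set F, and R(v) events with P(R(v)) ≤ α(v) for all v ∈ F. Then P(⋃_{v ∈ F} R(v)) ≤ α(v0). -/
open Function MeasureTheory
open scoped NNReal ENNReal

/-- A finite rooted tree, encoded by a parent function. The root is a fixed
point of `parent`, and iterating `parent` from any vertex reaches the root. -/
structure CaDTree (V : Type) [Fintype V] [DecidableEq V] where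
  root : V
  parent : V → V
  parent_root : parent root = root
  reaches_root : ∀ v, ∃ n, parent^[n] v = root

namespace CaDTree

variable {V : Type} [Fintype V] [DecidableEq V] (T : CaDTree V)

/-- `u` is an ancestor of `v` (including `v` itself). -/
def Ancestor (u v : V) : Prop := ∃ n, T.parent^[n] v = u

/-- `u` is a proper ancestor of `v`. -/
def ProperAncestor (u v : V) : Prop := T.Ancestor u v ∧ u ≠ v

/-- The set of (immediate) children of `v`. -/
def children (v : V) : Finset V :=
  Finset.univ.filter (fun w => T.parent w = v ∧ w ≠ T.root)

/-- A leaf is a vertex without children. -/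
def IsLeaf (v : V) : Prop := T.children v = ∅

/-- Depth of a vertex: distance to the root along the parent map. -/
noncomputable def depth (v : V) : ℕ := Nat.find (T.reaches_root v)

/-- The tree is complete of depth `L`: every leaf lies at depth `L`. -/
def CompleteDepth (L : ℕ) : Prop := ∀ v, T.IsLeaf v → T.depth v = L

/-- Local Bonferroni condition for the levels `α`. -/
def LocalBonferroni (α : V → ℝ≥0) : Prop :=
  ∀ v, ¬ T.IsLeaf v → ∑ w ∈ T.children v, α w ≤ α v

/-- The first-true set of a labeling: vertices labeled `true` all of whose
proper ancestors are labeled `false`. -/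
noncomputable def firstTrue (t : V → Bool) : Finset V :=
  letI := Classical.decPred (fun v => t v = true ∧ ∀ u, T.ProperAncestor u v → t u = false)
  Finset.univ.filter (fun v => t v = true ∧ ∀ u, T.ProperAncestor u v → t u = false)

/-- An antichain: no vertex of `A` is an ancestor of another vertex of `A`. -/
def IsAntichainTree (A : Finset V) : Prop :=
  ∀ u ∈ A, ∀ v ∈ A, u ≠ v → ¬ T.Ancestor u v

end CaDTree

open scoped Classical

namespace CaDTree
variable {V : Type} [Fintype V] [DecidableEq V] (T : CaDTree V)

lemma aux_iterate_root (n : ℕ) : T.parent^[n] T.root = T.root :=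
  Function.iterate_fixed T.parent_root n

lemma aux_eq_root_of_cycle {v : V} {k : ℕ} (hk : 0 < k) (h : T.parent^[k] v = v) :
    v = T.root := by
  obtain ⟨N, hN⟩ := T.reaches_root v
  have hcyc : ∀ s, T.parent^[k * s] v = v := by
    intro s
    induction s with
    | zero => simp
    | succ s ih =>
      rw [Nat.mul_succ, Function.iterate_add_apply, h, ih]
  have hle : N ≤ k * N := Nat.le_mul_of_pos_left N hk
  calc v = T.parent^[k * N] v := (hcyc N).symm
    _ = T.parent^[k * N - N] (T.parent^[N] v) := by
        rw [← Function.iterate_add_apply, Nat.sub_add_cancel hle]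
    _ = T.root := by rw [hN, T.aux_iterate_root]

/-- If `w` is a strict descendant of `v`, it is a descendant of some child of `v`. -/
lemma aux_exists_child {v w : V} (hvw : T.Ancestor v w) (hne : w ≠ v) :
    ∃ c ∈ T.children v, T.Ancestor c w := by
  have hex : ∃ n, T.parent^[n] w = v := hvw
  set n := Nat.find hex with hn
  have hfind : T.parent^[n] w = v := Nat.find_spec hex
  have hnpos : 0 < n := by
    rcases Nat.eq_zero_or_pos n with h0 | h
    · exfalso; apply hne; rw [← hfind, h0]; rfl
    · exact h
  refine ⟨T.parent^[n - 1] w, ?_, ⟨n - 1, rfl⟩⟩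
  have hpc : T.parent (T.parent^[n - 1] w) = v := by
    calc T.parent (T.parent^[n - 1] w) = T.parent^[n - 1 + 1] w :=
          (Function.iterate_succ_apply' _ _ _).symm
      _ = v := by rw [Nat.sub_add_cancel hnpos]; exact hfind
  have hcr : T.parent^[n - 1] w ≠ T.root := by
    intro hroot
    have hvr : v = T.root := by rw [← hpc, hroot, T.parent_root]
    have : T.parent^[n - 1] w = v := by rw [hroot, hvr]
    exact absurd this (Nat.find_min hex (Nat.sub_lt hnpos one_pos))
  simp [children, hpc, hcr]

/-- No child of `v` is an ancestor of a different child of `v`. -/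
lemma aux_child_not_anc {v c₁ c₂ : V} (h1 : c₁ ∈ T.children v) (h2 : c₂ ∈ T.children v)
    (hne : c₁ ≠ c₂) : ¬ T.Ancestor c₂ c₁ := by
  simp only [children, Finset.mem_filter] at h1 h2
  rintro ⟨k, hk⟩
  have hpos : 0 < k := by
    rcases Nat.eq_zero_or_pos k with h0 | h
    · exact absurd (by rw [← hk, h0]; rfl) hne
    · exact h
  have hk1 : k - 1 + 1 = k := Nat.sub_add_cancel hpos
  have hcycv : T.parent^[k] v = v := by
    calc T.parent^[k] v = T.parent^[k] (T.parent c₁) := by rw [h1.2.1]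
      _ = T.parent^[k + 1] c₁ := by rw [Function.iterate_succ_apply]
      _ = T.parent (T.parent^[k] c₁) := Function.iterate_succ_apply' _ _ _
      _ = T.parent c₂ := by rw [hk]
      _ = v := h2.2.1
  have hvr : v = T.root := T.aux_eq_root_of_cycle hpos hcycv
  apply h2.2.2
  calc c₂ = T.parent^[k] c₁ := hk.symm
    _ = T.parent^[k - 1 + 1] c₁ := by rw [hk1]
    _ = T.parent^[k - 1] (T.parent c₁) := Function.iterate_succ_apply _ _ _
    _ = T.parent^[k - 1] v := by rw [h1.2.1]
    _ = T.root := by rw [hvr, T.aux_iterate_root]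

/-- Any two ancestors of a common vertex are comparable. -/
lemma aux_comparable {a b w : V} (ha : T.Ancestor a w) (hb : T.Ancestor b w) :
    T.Ancestor b a ∨ T.Ancestor a b := by
  obtain ⟨n₁, hn₁⟩ := ha
  obtain ⟨n₂, hn₂⟩ := hb
  rcases le_total n₁ n₂ with h | h
  · left
    exact ⟨n₂ - n₁, by rw [← hn₁, ← Function.iterate_add_apply, Nat.sub_add_cancel h, hn₂]⟩
  · right
    exact ⟨n₁ - n₂, by rw [← hn₂, ← Function.iterate_add_apply, Nat.sub_add_cancel h, hn₁]⟩

/-- Distinct children have disjoint descendant sets. -/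
lemma aux_disjoint {v c₁ c₂ w : V} (h1 : c₁ ∈ T.children v) (h2 : c₂ ∈ T.children v)
    (hne : c₁ ≠ c₂) (ha1 : T.Ancestor c₁ w) (ha2 : T.Ancestor c₂ w) : False := by
  rcases T.aux_comparable ha1 ha2 with h | h
  · exact T.aux_child_not_anc h1 h2 hne h
  · exact T.aux_child_not_anc h2 h1 hne.symm h

lemma aux_antichain_sum (α : V → ℝ≥0) (hLB : T.LocalBonferroni α)
    (A : Finset V) (hA : T.IsAntichainTree A) :
    ∀ n (v : V), (Finset.univ.filter (fun w => T.Ancestor v w)).card ≤ n →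
      ∑ w ∈ A.filter (fun w => T.Ancestor v w), α w ≤ α v := by
  intro n
  induction n with
  | zero =>
    intro v hcard
    exfalso
    have hv : v ∈ Finset.univ.filter (fun w => T.Ancestor v w) := by
      simp only [Finset.mem_filter, Finset.mem_univ, true_and]
      exact ⟨0, rfl⟩
    have := Finset.card_pos.mpr ⟨v, hv⟩
    omega
  | succ n ih =>
    intro v hcard
    by_cases hvA : v ∈ A
    · have hsub : A.filter (fun w => T.Ancestor v w) ⊆ {v} := by
        intro w hw
        simp only [Finset.mem_filter] at hw
        simp only [Finset.mem_singleton]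
        by_contra hne
        exact hA v hvA w hw.1 (Ne.symm hne) hw.2
      calc ∑ w ∈ A.filter (fun w => T.Ancestor v w), α w
          ≤ ∑ w ∈ ({v} : Finset V), α w := Finset.sum_le_sum_of_subset hsub
        _ = α v := Finset.sum_singleton _ _
    · have hsub : A.filter (fun w => T.Ancestor v w) ⊆
          (T.children v).biUnion (fun c => A.filter (fun w => T.Ancestor c w)) := by
        intro w hw
        simp only [Finset.mem_filter] at hw
        have hne : w ≠ v := fun h => hvA (h ▸ hw.1)
        obtain ⟨c, hc, hcw⟩ := T.aux_exists_child hw.2 hne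
        exact Finset.mem_biUnion.mpr ⟨c, hc, Finset.mem_filter.mpr ⟨hw.1, hcw⟩⟩
      by_cases hleaf : T.IsLeaf v
      · have hbe : (T.children v).biUnion (fun c => A.filter (fun w => T.Ancestor c w)) = ∅ := by
          rw [hleaf]; rfl
        have h0 : A.filter (fun w => T.Ancestor v w) = ∅ :=
          Finset.subset_empty.mp (hbe ▸ hsub)
        rw [h0]; simp
      · have hdisj : ∀ c₁ ∈ T.children v, ∀ c₂ ∈ T.children v, c₁ ≠ c₂ →
            Disjoint (A.filter (fun w => T.Ancestor c₁ w))
              (A.filter (fun w => T.Ancestor c₂ w)) := by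
          intro c₁ hc₁ c₂ hc₂ hne
          rw [Finset.disjoint_left]
          intro w hw₁ hw₂
          simp only [Finset.mem_filter] at hw₁ hw₂
          exact T.aux_disjoint hc₁ hc₂ hne hw₁.2 hw₂.2
        calc ∑ w ∈ A.filter (fun w => T.Ancestor v w), α w
            ≤ ∑ w ∈ (T.children v).biUnion (fun c => A.filter (fun w => T.Ancestor c w)), α w :=
              Finset.sum_le_sum_of_subset hsub
          _ = ∑ c ∈ T.children v, ∑ w ∈ A.filter (fun w => T.Ancestor c w), α w :=
              Finset.sum_biUnion hdisj
          _ ≤ ∑ c ∈ T.children v, α c := by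
              refine Finset.sum_le_sum fun c hc => ih c ?_
              have hssub : Finset.univ.filter (fun w => T.Ancestor c w) ⊂
                  Finset.univ.filter (fun w => T.Ancestor v w) := by
                constructor
                · intro w hw
                  simp only [Finset.mem_filter, Finset.mem_univ, true_and] at hw ⊢
                  obtain ⟨m, hm⟩ := hw
                  refine ⟨m + 1, ?_⟩
                  rw [Function.iterate_succ_apply', hm]
                  simp only [children, Finset.mem_filter] at hc
                  exact hc.2.1
                · intro hcon
                  have hv : v ∈ Finset.univ.filter (fun w => T.Ancestor v w) := by
                    simp only [Finset.mem_filter, Finset.mem_univ, true_and]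
                    exact ⟨0, rfl⟩
                  have hv' := hcon hv
                  simp only [Finset.mem_filter, Finset.mem_univ, true_and] at hv'
                  obtain ⟨m, hm⟩ := hv'
                  simp only [children, Finset.mem_filter] at hc
                  have hcyc : T.parent^[m + 1] c = c := by
                    rw [Function.iterate_succ_apply, hc.2.1, hm]
                  exact hc.2.2 (T.aux_eq_root_of_cycle (Nat.succ_pos m) hcyc)
              have := Finset.card_lt_card hssub
              omega
          _ ≤ α v := hLB v hleaf

lemma aux_antichain_sum_root (α : V → ℝ≥0) (hLB : T.LocalBonferroni α)
    (A : Finset V) (hA : T.IsAntichainTree A) :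
    ∑ w ∈ A, α w ≤ α T.root := by
  have hall : A.filter (fun w => T.Ancestor T.root w) = A := by
    apply Finset.filter_true_of_mem
    intro w _
    exact T.reaches_root w
  have := T.aux_antichain_sum α hLB A hA
    (Finset.univ.filter (fun w => T.Ancestor T.root w)).card T.root le_rfl
  rwa [hall] at this

lemma aux_mem_firstTrue {t : V → Bool} {v : V} (h : v ∈ T.firstTrue t) :
    t v = true ∧ ∀ u, T.ProperAncestor u v → t u = false := by
  simp only [firstTrue, Finset.mem_filter] at h
  exact h.2

end CaDTree


/-- union bound over the first-true set combined with the
frontier estimate. -/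
theorem union_bound_firstTrue {V : Type} [Fintype V] [DecidableEq V]
    (T : CaDTree V) (α : V → ℝ≥0) (hLB : T.LocalBonferroni α)
    (t : V → Bool) {Ω : Type} [MeasurableSpace Ω] (P : Measure Ω)
    [IsProbabilityMeasure P] (R : V → Set Ω)
    (hlevel : ∀ v ∈ T.firstTrue t, P (R v) ≤ α v) :
    P (⋃ v ∈ T.firstTrue t, R v) ≤ α T.root := by
  have hAC : T.IsAntichainTree (T.firstTrue t) := by
    intro u hu v hv hne hanc
    have hu' := T.aux_mem_firstTrue hu
    have hv' := T.aux_mem_firstTrue hv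
    have := hv'.2 u ⟨hanc, hne⟩
    rw [hu'.1] at this
    exact Bool.noConfusion this
  calc P (⋃ v ∈ T.firstTrue t, R v)
      ≤ ∑ v ∈ T.firstTrue t, P (R v) := measure_biUnion_finset_le _ _
    _ ≤ ∑ v ∈ T.firstTrue t, (α v : ℝ≥0∞) := Finset.sum_le_sum hlevel
    _ = ((∑ v ∈ T.firstTrue t, α v : ℝ≥0) : ℝ≥0∞) := by rw [ENNReal.coe_finset_sum]
    _ ≤ (α T.root : ℝ≥0∞) :=
        ENNReal.coe_le_coe.mpr (T.aux_antichain_sum_root α hLB _ hAC)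
end

section
/- Let T be a finite rooted tree, and for each vertex v let d(v) be its set of children. Suppose each v carries a finite family of 'local' events {R(v, v') : v' ∈ d(v)} on a probability space (Ω, 𝒜, P) with labels s(v, v') ∈ {0,1}, and let α : V → ℝ≥0 satisfy the local Bonferroni condition. Assign t(v) = 1 if s(v, v') = 1 for some v' ∈ d(v), and t(v) = 0 otherwise, and suppose that whenever t(v) = 1, P(∃ v' ∈ d(v) with s(v,v') = 1 and R(v,v') occurs) ≤ α(v). Define the extended CaD false-rejection event as: there exist a vertex w and a child w' ∈ d(w) with s(w,w') = 1 and R(w,w') occurring, such that for every proper ancestor u of w, all local events R(u, u'), u' ∈ d(u), occur. Then the probability of the extended CaD false-rejection event is at most α(v0). -/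
open Function MeasureTheory
open scoped NNReal ENNReal

namespace CaDTree

variable {V : Type} [Fintype V] [DecidableEq V] (T : CaDTree V)

-- Auxiliary lemmas


lemma iterate_root (k : ℕ) : T.parent^[k] T.root = T.root :=
  Function.iterate_fixed T.parent_root k

lemma depth_spec (v : V) : T.parent^[T.depth v] v = T.root := Nat.find_spec (T.reaches_root v)

lemma iterate_eq_root {v : V} {m : ℕ} (h : T.depth v ≤ m) : T.parent^[m] v = T.root := by
  have h1 := T.depth_spec v
  have : T.parent^[m] v = T.parent^[m - T.depth v] (T.parent^[T.depth v] v) := by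
    rw [← Function.iterate_add_apply]; congr 1; omega
  rw [this, h1, T.iterate_root]

lemma depth_eq_zero {v : V} : T.depth v = 0 ↔ v = T.root := by
  constructor
  · intro h; have := T.depth_spec v; rwa [h, Function.iterate_zero_apply] at this
  · intro h; subst h
    exact Nat.eq_zero_of_le_zero (Nat.find_le (by simp))

lemma anc_depth {u a : V} {k : ℕ} (hu : u ≠ T.root) (h : T.parent^[k] a = u) :
    k + T.depth u = T.depth a := by
  have hk : k < T.depth a := by
    by_contra hc
    exact hu (h ▸ T.iterate_eq_root (by omega))
  have h1 : T.depth u ≤ T.depth a - k := by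
    apply Nat.find_le
    rw [← h, ← Function.iterate_add_apply]
    have : T.depth a - k + k = T.depth a := by omega
    rw [this]; exact T.depth_spec a
  have h2 : T.depth a ≤ k + T.depth u := by
    apply Nat.find_le
    rw [add_comm, Function.iterate_add_apply, h]
    exact T.depth_spec u
  omega

lemma ancestor_refl (v : V) : T.Ancestor v v := ⟨0, rfl⟩

lemma ancestor_trans {w u v : V} (h1 : T.Ancestor u v) (h2 : T.Ancestor w u) :
    T.Ancestor w v := by
  obtain ⟨n, hn⟩ := h1; obtain ⟨m, hm⟩ := h2
  exact ⟨m + n, by rw [Function.iterate_add_apply, hn, hm]⟩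

lemma proper_depth_lt {u v : V} (h : T.ProperAncestor u v) : T.depth u < T.depth v := by
  obtain ⟨⟨n, hn⟩, hne⟩ := h
  by_cases hu : u = T.root
  · subst hu
    have h0 : T.depth T.root = 0 := T.depth_eq_zero.mpr rfl
    have : T.depth v ≠ 0 := fun hc => hne (T.depth_eq_zero.mp hc).symm
    omega
  · have := T.anc_depth hu hn
    have hn0 : n ≠ 0 := by rintro rfl; exact hne hn.symm
    omega

lemma ancestor_antisymm {u v : V} (h1 : T.Ancestor u v) (h2 : T.Ancestor v u) : u = v := by
  by_contra hne
  have l1 := T.proper_depth_lt ⟨h1, hne⟩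
  have l2 := T.proper_depth_lt ⟨h2, Ne.symm hne⟩
  omega

lemma root_ancestor (v : V) : T.Ancestor T.root v := ⟨T.depth v, T.depth_spec v⟩

lemma mem_children {c v : V} : c ∈ T.children v ↔ T.parent c = v ∧ c ≠ T.root := by
  simp [children]

lemma child_ancestor {c v : V} (h : c ∈ T.children v) : T.Ancestor v c :=
  ⟨1, by simpa using (T.mem_children.mp h).1⟩

lemma depth_child {c v : V} (h : c ∈ T.children v) : T.depth c = T.depth v + 1 := by
  obtain ⟨hp, hr⟩ := T.mem_children.mp h
  have h1 : T.depth c ≠ 0 := fun hc => hr (T.depth_eq_zero.mp hc)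
  have h2 : T.depth v ≤ T.depth c - 1 := by
    apply Nat.find_le
    rw [← hp]
    have : T.parent^[T.depth c - 1] (T.parent c) = T.parent^[T.depth c - 1 + 1] c :=
      (Function.iterate_succ_apply _ _ _).symm
    rw [this]
    have : T.depth c - 1 + 1 = T.depth c := by omega
    rw [this]; exact T.depth_spec c
  have h3 : T.depth c ≤ T.depth v + 1 := by
    apply Nat.find_le
    rw [Function.iterate_succ_apply, hp]
    exact T.depth_spec v
  omega

lemma exists_child {v a : V} (h : T.Ancestor v a) (hne : v ≠ a) :
    ∃ c ∈ T.children v, T.Ancestor c a := by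
  classical
  set n := Nat.find h with hn_def
  have hn : T.parent^[n] a = v := Nat.find_spec h
  have hn0 : n ≠ 0 := by rintro h0; rw [h0] at hn; exact hne hn.symm
  refine ⟨T.parent^[n-1] a, ?_, ⟨n - 1, rfl⟩⟩
  have hpc : T.parent (T.parent^[n-1] a) = v := by
    have : T.parent (T.parent^[n-1] a) = T.parent^[n-1+1] a :=
      (Function.iterate_succ_apply' _ _ _).symm
    rw [this]; have : n - 1 + 1 = n := by omega
    rw [this]; exact hn
  refine T.mem_children.mpr ⟨hpc, ?_⟩
  intro hroot
  have hv : v = T.root := by rw [← hpc, hroot, T.parent_root]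
  exact Nat.find_min h (m := n - 1) (by omega) (by rw [hroot, ← hv])

lemma child_unique {v c c' a : V} (hc : c ∈ T.children v) (hc' : c' ∈ T.children v)
    (h : T.Ancestor c a) (h' : T.Ancestor c' a) : c = c' := by
  have key : ∀ b b' : V, b ∈ T.children v → b' ∈ T.children v →
      ∀ i j : ℕ, i ≤ j → T.parent^[i] a = b → T.parent^[j] a = b' → b = b' := by
    intro b b' hb hb' i j hij hi hj
    have hb'a : T.parent^[j - i] b = b' := by
      rw [← hi, ← Function.iterate_add_apply]
      have : j - i + i = j := by omega
      rw [this]; exact hj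
    have hbr := (T.mem_children.mp hb').2
    have hd := T.anc_depth hbr hb'a
    have d1 := T.depth_child hb
    have d2 := T.depth_child hb'
    have : j - i = 0 := by omega
    rw [this] at hb'a; simpa using hb'a
  obtain ⟨i, hi⟩ := h; obtain ⟨j, hj⟩ := h'
  rcases le_total i j with hij | hij
  · exact key c c' hc hc' i j hij hi hj
  · exact (key c' c hc' hc j i hij hj hi).symm

noncomputable def desc (v : V) : Finset V :=
  letI := Classical.decPred (T.Ancestor v)
  Finset.univ.filter (T.Ancestor v)

lemma mem_desc {v a : V} : a ∈ T.desc v ↔ T.Ancestor v a := by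
  classical
  simp [desc]

lemma desc_ssubset {v c : V} (hc : c ∈ T.children v) : T.desc c ⊂ T.desc v := by
  constructor
  · intro a ha
    exact T.mem_desc.mpr (T.ancestor_trans (T.mem_desc.mp ha) (T.child_ancestor hc))
  · intro hsub
    have hv : v ∈ T.desc v := T.mem_desc.mpr (T.ancestor_refl v)
    have hcv : T.Ancestor c v := T.mem_desc.mp (hsub hv)
    have : c = v := T.ancestor_antisymm hcv (T.child_ancestor hc)
    have hd := T.depth_child hc
    rw [this] at hd; omega

lemma antichain_sum_le (α : V → ℝ≥0) (hLB : T.LocalBonferroni α) :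
    ∀ n v (A : Finset V), (T.desc v).card ≤ n → T.IsAntichainTree A →
      (∀ a ∈ A, T.Ancestor v a) → ∑ a ∈ A, α a ≤ α v := by
  intro n
  induction n with
  | zero =>
    intro v A hcard _ _
    have : v ∈ T.desc v := T.mem_desc.mpr (T.ancestor_refl v)
    have := Finset.card_pos.mpr ⟨v, this⟩
    omega
  | succ n ih =>
    intro v A hcard hA hdesc
    classical
    by_cases hvA : v ∈ A
    · have hsub : A ⊆ {v} := by
        intro a ha
        rw [Finset.mem_singleton]
        by_contra hne
        exact hA v hvA a ha (Ne.symm hne) (hdesc a ha)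
      calc ∑ a ∈ A, α a ≤ ∑ a ∈ ({v} : Finset V), α a :=
            Finset.sum_le_sum_of_subset hsub
        _ = α v := by simp
    · rcases A.eq_empty_or_nonempty with rfl | ⟨a0, ha0⟩
      · simp
      · obtain ⟨c0, hc0, _⟩ := T.exists_child (hdesc a0 ha0)
          (by rintro rfl; exact hvA ha0)
        have hleaf : ¬ T.IsLeaf v := by
          intro h; rw [IsLeaf] at h; rw [h] at hc0; exact absurd hc0 (Finset.notMem_empty c0)
        have hsub : A ⊆ (T.children v).biUnion
            (fun c => A.filter (fun a => T.Ancestor c a)) := by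
          intro a ha
          obtain ⟨c, hc, hca⟩ := T.exists_child (hdesc a ha) (by rintro rfl; exact hvA ha)
          exact Finset.mem_biUnion.mpr ⟨c, hc, Finset.mem_filter.mpr ⟨ha, hca⟩⟩
        have hdisj : ∀ c ∈ T.children v, ∀ c' ∈ T.children v, c ≠ c' →
            Disjoint (A.filter (fun a => T.Ancestor c a))
              (A.filter (fun a => T.Ancestor c' a)) := by
          intro c hc c' hc' hne
          rw [Finset.disjoint_left]
          intro a ha ha'
          exact hne (T.child_unique hc hc' (Finset.mem_filter.mp ha).2
            (Finset.mem_filter.mp ha').2)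
        calc ∑ a ∈ A, α a
            ≤ ∑ a ∈ (T.children v).biUnion (fun c => A.filter (fun a => T.Ancestor c a)),
                α a := Finset.sum_le_sum_of_subset hsub
          _ = ∑ c ∈ T.children v, ∑ a ∈ A.filter (fun a => T.Ancestor c a), α a :=
              Finset.sum_biUnion hdisj
          _ ≤ ∑ c ∈ T.children v, α c := by
              apply Finset.sum_le_sum
              intro c hc
              apply ih c _ _ _ (fun a ha => (Finset.mem_filter.mp ha).2)
              · have := Finset.card_lt_card (T.desc_ssubset hc)
                omega
              · intro x hx y hy hxy
                exact hA x (Finset.mem_filter.mp hx).1 y (Finset.mem_filter.mp hy).1 hxy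
          _ ≤ α v := hLB v hleaf


end CaDTree

/-- the extended CaD procedure, with a local multiple testing
problem at each vertex, controls the familywise error at level `α(root)`. -/
theorem extended_cad_familywise_error {V : Type} [Fintype V] [DecidableEq V]
    (T : CaDTree V) (α : V → ℝ≥0) (hLB : T.LocalBonferroni α)
    {Ω : Type} [MeasurableSpace Ω] (P : Measure Ω) [IsProbabilityMeasure P]
    (R : V → V → Set Ω) (s : V → V → Bool)
    (hlocal : ∀ v, (∃ v' ∈ T.children v, s v v' = true) →
      P {ω | ∃ v' ∈ T.children v, s v v' = true ∧ ω ∈ R v v'} ≤ α v) :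
    P {ω | ∃ w, ∃ w' ∈ T.children w, s w w' = true ∧ ω ∈ R w w' ∧
        ∀ u, T.ProperAncestor u w → ∀ u' ∈ T.children u, ω ∈ R u u'} ≤
      α T.root := by
  classical
  set t : V → Bool := fun v => decide (∃ c ∈ T.children v, s v c = true) with ht_def
  have ht : ∀ v, t v = true ↔ ∃ c ∈ T.children v, s v c = true := by
    intro v; simp [ht_def]
  set FT := T.firstTrue t with hFT_def
  have hFT_mem : ∀ v, v ∈ FT ↔
      (t v = true ∧ ∀ u, T.ProperAncestor u v → t u = false) := by
    intro v; simp [hFT_def, CaDTree.firstTrue]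
  have hsub : {ω | ∃ w, ∃ w' ∈ T.children w, s w w' = true ∧ ω ∈ R w w' ∧
        ∀ u, T.ProperAncestor u w → ∀ u' ∈ T.children u, ω ∈ R u u'} ⊆
      ⋃ v ∈ FT, {ω | ∃ c ∈ T.children v, s v c = true ∧ ω ∈ R v c} := by
    rintro ω ⟨w, w', hw', hs, hR, hanc⟩
    set S : Finset V := Finset.univ.filter (fun u => T.Ancestor u w ∧ t u = true) with hS
    have hwS : w ∈ S := by
      simp only [hS, Finset.mem_filter, Finset.mem_univ, true_and]
      exact ⟨T.ancestor_refl w, (ht w).mpr ⟨w', hw', hs⟩⟩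
    obtain ⟨u0, hu0S, hu0min⟩ := S.exists_min_image T.depth ⟨w, hwS⟩
    simp only [hS, Finset.mem_filter, Finset.mem_univ, true_and] at hu0S
    obtain ⟨hu0w, hu0t⟩ := hu0S
    have hu0FT : u0 ∈ FT := by
      rw [hFT_mem]
      refine ⟨hu0t, fun u hu => ?_⟩
      by_contra hut
      have hut' : t u = true := by simpa using hut
      have huw : T.Ancestor u w := T.ancestor_trans hu0w hu.1
      have huS : u ∈ S := by
        simp only [hS, Finset.mem_filter, Finset.mem_univ, true_and]
        exact ⟨huw, hut'⟩
      have h1 := hu0min u huS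
      have h2 := T.proper_depth_lt hu
      omega
    apply Set.mem_biUnion hu0FT
    by_cases heq : u0 = w
    · subst heq; exact ⟨w', hw', hs, hR⟩
    · obtain ⟨c, hc, hsc⟩ := (ht u0).mp hu0t
      exact ⟨c, hc, hsc, hanc u0 ⟨hu0w, heq⟩ c hc⟩
  calc P {ω | ∃ w, ∃ w' ∈ T.children w, s w w' = true ∧ ω ∈ R w w' ∧
        ∀ u, T.ProperAncestor u w → ∀ u' ∈ T.children u, ω ∈ R u u'}
      ≤ P (⋃ v ∈ FT, {ω | ∃ c ∈ T.children v, s v c = true ∧ ω ∈ R v c}) :=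
        measure_mono hsub
    _ ≤ ∑ v ∈ FT, P {ω | ∃ c ∈ T.children v, s v c = true ∧ ω ∈ R v c} :=
        measure_biUnion_finset_le _ _
    _ ≤ ∑ v ∈ FT, (α v : ℝ≥0∞) :=
        Finset.sum_le_sum fun v hv => hlocal v ((ht v).mp ((hFT_mem v).mp hv).1)
    _ = ((∑ v ∈ FT, α v : ℝ≥0) : ℝ≥0∞) := (ENNReal.coe_finset_sum _ _).symm
    _ ≤ (α T.root : ℝ≥0∞) := by
        apply ENNReal.coe_le_coe.mpr
        apply T.antichain_sum_le α hLB (T.desc T.root).card T.root FT le_rfl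
        · intro u hu v hv huv hA
          have hfalse := ((hFT_mem v).mp hv).2 u ⟨hA, huv⟩
          have htrue := ((hFT_mem u).mp hu).1
          rw [htrue] at hfalse; exact absurd hfalse (by simp)
        · exact fun a _ => T.root_ancestor a
end
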